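/- With the setup of the finite Dirichlet problem Δu = λe^u(e^u−1)^{2p+1} + h on Ω ⊂ ℤⁿ, u = 0 on ∂Ω: the solution u_Ω obtained as the limit of the monotone iteration is maximal, i.e., any function U on Ω̄ satisfying ΔU ≥ λe^U(e^U−1)^{2p+1} + h on Ω and U ≤ 0 on ∂Ω satisfies U ≤ u_Ω on Ω̄. -/

import Mathlib

open Finset

noncomputable section

/-- Vertices of the lattice graph `ℤⁿ`. -/
abbrev LV (n : ℕ) := Fin n → ℤ

/-- The set of neighbors of a vertex `x` in the lattice graph `ℤⁿ`
(the points differing from `x` by `±1` in exactly one coordinate). -/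
def latNbrs {n : ℕ} (x : LV n) : Finset (LV n) :=
  Finset.image (fun p : Fin n × Bool =>
    Function.update x p.1 (x p.1 + (if p.2 then 1 else -1))) Finset.univ

/-- The graph Laplacian on `ℤⁿ`: `Δu(x) = Σ_{y∼x} (u(y) - u(x))`. -/
def latLap {n : ℕ} (u : LV n → ℝ) (x : LV n) : ℝ :=
  ∑ y ∈ latNbrs x, (u y - u x)

/-- The boundary `∂Ω = {y ∉ Ω : ∃ x ∈ Ω, y ∼ x}` of a finite set `Ω ⊂ ℤⁿ`. -/
def latBdry {n : ℕ} (Ω : Finset (LV n)) : Finset (LV n) :=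
  Ω.biUnion latNbrs \ Ω

/-- The closure `Ω̄ = Ω ∪ ∂Ω`. -/
def latClosure {n : ℕ} (Ω : Finset (LV n)) : Finset (LV n) :=
  Ω ∪ latBdry Ω

/-- The bilinear Dirichlet form
`E_Ω(u,v) = (1/2) Σ_{x,y ∈ Ω̄, x∼y} (u(y)-u(x))(v(y)-v(x))`. -/
def latEnergy {n : ℕ} (Ω : Finset (LV n)) (u v : LV n → ℝ) : ℝ :=
  (1 / 2) * ∑ x ∈ latClosure Ω, ∑ y ∈ latNbrs x ∩ latClosure Ω,
    (u y - u x) * (v y - v x)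

/-- The source term `h = 4π Σ_{j=1}^M n_j δ_{p_j}`. -/
def chernH {n M : ℕ} (nj : Fin M → ℕ) (pts : Fin M → LV n) (x : LV n) : ℝ :=
  4 * Real.pi * ∑ j, (nj j : ℝ) * (if x = pts j then 1 else 0)

/-- The lattice graph `ℤⁿ`: `x ∼ y` iff `Σ_i |x_i - y_i| = 1`. -/
def latticeGraph (n : ℕ) : SimpleGraph (LV n) where
  Adj x y := ∑ i, (x i - y i).natAbs = 1
  symm := by
    constructor
    intro x y h
    have e : ∀ i, (y i - x i).natAbs = (x i - y i).natAbs := fun i => by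
      rw [← neg_sub, Int.natAbs_neg]
    simpa [e] using h
  loopless := by
    constructor
    intro x h
    simp at h



lemma self_not_mem_latNbrs {n : ℕ} (x : LV n) : x ∉ latNbrs x := by
  intro hx
  simp only [latNbrs, mem_image, mem_univ, true_and] at hx
  obtain ⟨q, hq⟩ := hx
  have := congrFun hq q.1
  rw [Function.update_self] at this
  rcases q.2 <;> simp at this <;> omega

lemma latNbrs_subset_closure {n : ℕ} {Ω : Finset (LV n)} {x : LV n} (hx : x ∈ Ω) :
    latNbrs x ⊆ latClosure Ω := by
  intro y hy
  by_cases hyΩ : y ∈ Ω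
  · exact mem_union_left _ hyΩ
  · refine mem_union_right _ ?_
    rw [latBdry, mem_sdiff]
    exact ⟨mem_biUnion.mpr ⟨x, hx, hy⟩, hyΩ⟩

lemma latLap_mono {n : ℕ} {u v : LV n → ℝ} {x : LV n} (hx : u x = v x)
    (h : ∀ y ∈ latNbrs x, u y ≤ v y) : latLap u x ≤ latLap v x := by
  apply Finset.sum_le_sum
  intro y hy
  have := h y hy
  rw [hx] at *
  linarith

lemma chernH_nonneg {n M : ℕ} (nj : Fin M → ℕ) (pts : Fin M → LV n) (x : LV n) :
    0 ≤ chernH nj pts x := by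
  apply mul_nonneg
  · positivity
  · apply Finset.sum_nonneg
    intro j _
    positivity

def nlf (lam : ℝ) (p : ℕ) (t : ℝ) : ℝ := lam * Real.exp t * (Real.exp t - 1) ^ (2 * p + 1)

lemma nlf_nonpos {lam : ℝ} (hlam : 0 < lam) (p : ℕ) {t : ℝ} (ht : t ≤ 0) :
    nlf lam p t ≤ 0 := by
  have h1 : Real.exp t - 1 ≤ 0 := by
    have := Real.exp_le_one_iff.mpr ht; linarith
  have h2 : (Real.exp t - 1) ^ (2 * p + 1) ≤ 0 := Odd.pow_nonpos ⟨p, by ring⟩ h1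
  have h3 : 0 ≤ lam * Real.exp t := by positivity
  exact mul_nonpos_of_nonneg_of_nonpos h3 h2

lemma nlf_pos {lam : ℝ} (hlam : 0 < lam) (p : ℕ) {t : ℝ} (ht : 0 < t) :
    0 < nlf lam p t := by
  have h1 : 0 < Real.exp t - 1 := by
    have := Real.one_lt_exp_iff.mpr ht; linarith
  have := Real.exp_pos t
  unfold nlf; positivity

lemma continuous_nlf (lam : ℝ) (p : ℕ) : Continuous (nlf lam p) := by
  unfold nlf; fun_prop

/-- The maximum principle: subsolutions with nonpositive boundary data are nonpositive. -/
lemma subsol_nonpos {n M : ℕ} {lam : ℝ} (hlam : 0 < lam) (p : ℕ)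
    (nj : Fin M → ℕ) (pts : Fin M → LV n) {Ω : Finset (LV n)} {U : LV n → ℝ}
    (hsub : ∀ x ∈ Ω, nlf lam p (U x) + chernH nj pts x ≤ latLap U x)
    (hbd : ∀ x ∈ latBdry Ω, U x ≤ 0) :
    ∀ x ∈ latClosure Ω, U x ≤ 0 := by
  by_contra hc
  push_neg at hc
  obtain ⟨x, hxc, hxpos⟩ := hc
  obtain ⟨x₀, hx₀c, hmax⟩ := (latClosure Ω).exists_max_image U ⟨x, hxc⟩
  have hx₀pos : 0 < U x₀ := lt_of_lt_of_le hxpos (hmax x hxc)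
  have hx₀Ω : x₀ ∈ Ω := by
    rcases mem_union.mp hx₀c with h | h
    · exact h
    · exact absurd (hbd x₀ h) (by linarith)
  have hlap : latLap U x₀ ≤ 0 := by
    apply Finset.sum_nonpos
    intro y hy
    have : U y ≤ U x₀ := hmax y (latNbrs_subset_closure hx₀Ω hy)
    linarith
  have := hsub x₀ hx₀Ω
  have hf := nlf_pos hlam p hx₀pos
  have hh := chernH_nonneg nj pts x₀
  linarith

lemma latLap_add {n : ℕ} (u v : LV n → ℝ) (x : LV n) :
    latLap (u + v) x = latLap u x + latLap v x := by
  unfold latLap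
  rw [← Finset.sum_add_distrib]
  apply Finset.sum_congr rfl
  intro y _; simp [Pi.add_apply]; ring

lemma latLap_smul {n : ℕ} (c : ℝ) (u : LV n → ℝ) (x : LV n) :
    latLap (c • u) x = c * latLap u x := by
  unfold latLap
  rw [Finset.mul_sum]
  apply Finset.sum_congr rfl
  intro y _; simp [Pi.smul_apply]; ring

lemma latLap_neg {n : ℕ} (u : LV n → ℝ) (x : LV n) :
    latLap (-u) x = -latLap u x := by
  unfold latLap
  rw [← Finset.sum_neg_distrib]
  apply Finset.sum_congr rfl
  intro y _; simp; ring

/-- Strong maximum principle: a harmonic function vanishing outside Ω is ≤ 0. -/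
lemma latHarmonic_nonpos {n : ℕ} (hn : 1 ≤ n) {Ω : Finset (LV n)} {u : LV n → ℝ}
    (h0 : ∀ x ∉ Ω, u x = 0) (hlap : ∀ x ∈ Ω, latLap u x = 0) :
    ∀ x, u x ≤ 0 := by
  by_contra hc
  push_neg at hc
  obtain ⟨x, hxpos⟩ := hc
  have hxΩ : x ∈ Ω := by
    by_contra h; rw [h0 x h] at hxpos; linarith
  obtain ⟨x₁, hx₁, hmax⟩ := Ω.exists_max_image u ⟨x, hxΩ⟩
  set m := u x₁ with hm
  have hmpos : 0 < m := lt_of_lt_of_le hxpos (hmax x hxΩ)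
  have hub : ∀ y, u y ≤ m := by
    intro y
    by_cases hy : y ∈ Ω
    · exact hmax y hy
    · rw [h0 y hy]; linarith
  set i0 : Fin n := ⟨0, by omega⟩ with hi0
  set S := Ω.filter (fun y => u y = m) with hS
  obtain ⟨x₀, hx₀S, hcoord⟩ := S.exists_max_image (fun y => y i0)
    ⟨x₁, by simp [hS, hx₁, hm]⟩
  have hx₀Ω : x₀ ∈ Ω := (mem_filter.mp hx₀S).1
  have hx₀m : u x₀ = m := (mem_filter.mp hx₀S).2
  have hterm : ∀ y ∈ latNbrs x₀, u y - u x₀ ≤ 0 := by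
    intro y _; have := hub y; linarith
  have hall : ∀ y ∈ latNbrs x₀, u y - u x₀ = 0 :=
    (Finset.sum_eq_zero_iff_of_nonpos hterm).mp (hlap x₀ hx₀Ω)
  set y₀ : LV n := Function.update x₀ i0 (x₀ i0 + 1) with hy₀
  have hy₀mem : y₀ ∈ latNbrs x₀ := by
    simp only [latNbrs, mem_image, mem_univ, true_and]
    exact ⟨(i0, true), by simp [hy₀]⟩
  have hy₀m : u y₀ = m := by
    have := hall y₀ hy₀mem; rw [hx₀m] at this; linarith
  have hy₀Ω : y₀ ∈ Ω := by
    by_contra h; rw [h0 y₀ h] at hy₀m; linarith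
  have hy₀S : y₀ ∈ S := by simp [hS, hy₀Ω, hy₀m]
  have := hcoord y₀ hy₀S
  simp only [hy₀, Function.update_self] at this
  omega

lemma latHarmonic_zero {n : ℕ} (hn : 1 ≤ n) {Ω : Finset (LV n)} {u : LV n → ℝ}
    (h0 : ∀ x ∉ Ω, u x = 0) (hlap : ∀ x ∈ Ω, latLap u x = 0) :
    ∀ x, u x = 0 := by
  have h1 := latHarmonic_nonpos hn h0 hlap
  have h2 := latHarmonic_nonpos hn (u := -u) (fun x hx => by simp [h0 x hx])
    (fun x hx => by rw [latLap_neg, hlap x hx]; ring)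
  intro x
  have := h1 x
  have := h2 x
  simp only [Pi.neg_apply] at *
  linarith

/-- Solvability of the discrete Dirichlet problem for the Laplacian. -/
lemma dirichlet_solvable {n : ℕ} (hn : 1 ≤ n) (Ω : Finset (LV n)) (g : LV n → ℝ) :
    ∃ W : LV n → ℝ, (∀ x ∉ Ω, W x = 0) ∧ ∀ x ∈ Ω, latLap W x = g x := by
  classical
  set E := ({x // x ∈ Ω} → ℝ)
  let ext : E → (LV n → ℝ) := fun u x => if hx : x ∈ Ω then u ⟨x, hx⟩ else 0
  have ext_add : ∀ u v : E, ext (u + v) = ext u + ext v := by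
    intro u v; funext x; by_cases hx : x ∈ Ω <;> simp [ext, hx] <;> rfl
  have ext_smul : ∀ (c : ℝ) (u : E), ext (c • u) = c • ext u := by
    intro c u; funext x; by_cases hx : x ∈ Ω <;> simp [ext, hx] <;> rfl
  let T : E →ₗ[ℝ] E :=
    { toFun := fun u x => latLap (ext u) x.1
      map_add' := by
        intro u v; funext x
        show latLap (ext (u + v)) x.1 = _
        rw [ext_add, latLap_add]; rfl
      map_smul' := by
        intro c u; funext x
        show latLap (ext (c • u)) x.1 = _
        rw [ext_smul, latLap_smul]; rfl }
  have hinj : Function.Injective T := by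
    intro a b hab
    have hz : T (a - b) = 0 := by rw [map_sub, hab, sub_self]
    have hzero : ∀ x, ext (a - b) x = 0 := by
      apply latHarmonic_zero hn (Ω := Ω)
      · intro x hx; simp [ext, hx]
      · intro x hx
        have := congrFun hz ⟨x, hx⟩
        exact this
    have : a - b = 0 := by
      funext x
      have := hzero x.1
      exact (by simpa [ext, x.2] using this : (a - b) x = 0)
    exact sub_eq_zero.mp this
  obtain ⟨W, hW⟩ := LinearMap.surjective_of_injective hinj (fun x => g x.1)
  refine ⟨ext W, fun x hx => by simp [ext, hx], fun x hx => ?_⟩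
  have := congrFun hW ⟨x, hx⟩
  exact this

lemma latLap_sub_const {n : ℕ} (u : LV n → ℝ) (c : ℝ) (x : LV n) :
    latLap (fun y => u y - c) x = latLap u x := by
  unfold latLap
  apply Finset.sum_congr rfl
  intro y _; ring

lemma continuous_latLap {n : ℕ} (x : LV n) :
    Continuous (fun U : LV n → ℝ => latLap U x) := by
  unfold latLap
  exact continuous_finset_sum _ fun y _ => (continuous_apply y).sub (continuous_apply x)

theorem dirichlet_maximal_solution' (n : ℕ) (hn : 2 ≤ n) (lam : ℝ) (hlam : 0 < lam) (p : ℕ)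
    (M : ℕ) (nj : Fin M → ℕ) (pts : Fin M → LV n)
    (Ω : Finset (LV n)) :
    ∃ u : LV n → ℝ,
      (∀ x ∈ Ω, latLap u x
          = lam * Real.exp (u x) * (Real.exp (u x) - 1) ^ (2 * p + 1) + chernH nj pts x) ∧
      (∀ x ∈ latBdry Ω, u x = 0) ∧
      ∀ U : LV n → ℝ,
        (∀ x ∈ Ω, lam * Real.exp (U x) * (Real.exp (U x) - 1) ^ (2 * p + 1) + chernH nj pts x
            ≤ latLap U x) →
        (∀ x ∈ latBdry Ω, U x ≤ 0) →
        ∀ x ∈ latClosure Ω, U x ≤ u x := by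
  classical
  set h : LV n → ℝ := chernH nj pts with hh
  set f : ℝ → ℝ := nlf lam p with hfdef
  have hfeq : ∀ t : ℝ, f t = lam * Real.exp t * (Real.exp t - 1) ^ (2 * p + 1) := fun t => rfl
  have hf0 : f 0 = 0 := by simp [hfdef, nlf]
  -- a subsolution
  obtain ⟨W, hW0, hWlap⟩ := dirichlet_solvable (by omega) Ω h
  set C : ℝ := max 0 (∑ x ∈ Ω, |W x|) with hC
  have hC0 : 0 ≤ C := le_max_left _ _
  have hWC : ∀ x ∈ Ω, W x ≤ C := by
    intro x hx
    calc W x ≤ |W x| := le_abs_self _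
    _ ≤ ∑ y ∈ Ω, |W y| := Finset.single_le_sum (f := fun y => |W y|) (fun y _ => abs_nonneg _) hx
    _ ≤ C := le_max_right _ _
  set W₀ : LV n → ℝ := fun x => if x ∈ Ω then W x - C else 0 with hW₀
  set c₀ : ℝ := -1 - C - ∑ x ∈ Ω, |W x| with hc₀def
  have hc₀ : c₀ ≤ 0 := by
    have : 0 ≤ ∑ x ∈ Ω, |W x| := Finset.sum_nonneg fun x _ => abs_nonneg _
    rw [hc₀def]; linarith
  have hW₀Icc : ∀ x, W₀ x ∈ Set.Icc c₀ 0 := by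
    intro x
    rw [hW₀]
    by_cases hx : x ∈ Ω
    · simp only [if_pos hx]
      constructor
      · have h1 : -|W x| ≤ W x := neg_abs_le _
        have h2 : |W x| ≤ ∑ y ∈ Ω, |W y| := Finset.single_le_sum (f := fun y => |W y|) (fun y _ => abs_nonneg _) hx
        rw [hc₀def]; linarith
      · have := hWC x hx; linarith
    · simp only [if_neg hx]
      exact ⟨hc₀, le_refl 0⟩
  have hW₀sub : ∀ x ∈ Ω, f (W₀ x) + h x ≤ latLap W₀ x := by
    intro x hx
    have h1 : latLap (fun y => W y - C) x ≤ latLap W₀ x := by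
      apply latLap_mono
      · simp [hW₀, hx]
      · intro y _
        rw [hW₀]
        by_cases hy : y ∈ Ω
        · simp [hy]
        · simp only [if_neg hy]
          rw [hW0 y hy]; linarith
    rw [latLap_sub_const, hWlap x hx] at h1
    have h2 : f (W₀ x) ≤ 0 := nlf_nonpos hlam p (hW₀Icc x).2
    linarith
  have hW₀z : ∀ x ∉ Ω, W₀ x = 0 := fun x hx => by simp [hW₀, hx]
  -- the compact set K
  set K : Set (LV n → ℝ) := {U | (∀ x ∈ Ω, f (U x) + h x ≤ latLap U x) ∧
      (∀ x, U x ∈ Set.Icc c₀ 0) ∧ (∀ x ∉ Ω, U x = 0)} with hK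
  have hW₀K : W₀ ∈ K := ⟨hW₀sub, hW₀Icc, hW₀z⟩
  have hA : IsClosed {U : LV n → ℝ | ∀ x ∈ Ω, f (U x) + h x ≤ latLap U x} := by
    have he : {U : LV n → ℝ | ∀ x ∈ Ω, f (U x) + h x ≤ latLap U x}
        = ⋂ x ∈ Ω, {U : LV n → ℝ | f (U x) + h x ≤ latLap U x} := by
      ext U; simp
    rw [he]
    refine isClosed_biInter fun x _ => isClosed_le ?_ ?_
    · exact (((continuous_nlf lam p).comp (continuous_apply x)).add continuous_const)
    · exact continuous_latLap x
  have hB : IsClosed {U : LV n → ℝ | ∀ x, U x ∈ Set.Icc c₀ 0} := by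
    have he : {U : LV n → ℝ | ∀ x, U x ∈ Set.Icc c₀ 0}
        = ⋂ x, {U : LV n → ℝ | U x ∈ Set.Icc c₀ 0} := by ext U; simp
    rw [he]
    exact isClosed_iInter fun x => isClosed_Icc.preimage (continuous_apply x)
  have hCc : IsClosed {U : LV n → ℝ | ∀ x ∉ Ω, U x = 0} := by
    have he : {U : LV n → ℝ | ∀ x ∉ Ω, U x = 0}
        = ⋂ x, {U : LV n → ℝ | x ∉ Ω → U x = 0} := by ext U; simp
    rw [he]
    refine isClosed_iInter fun x => ?_
    by_cases hx : x ∈ Ω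
    · have he2 : {U : LV n → ℝ | x ∉ Ω → U x = 0} = Set.univ := by
        ext U; simp [hx]
      rw [he2]; exact isClosed_univ
    · have he2 : {U : LV n → ℝ | x ∉ Ω → U x = 0} = {U : LV n → ℝ | U x = 0} := by
        ext U; simp [hx]
      rw [he2]
      exact isClosed_eq (continuous_apply x) continuous_const
  have hKclosed : IsClosed K := by
    have hKeq : K = {U : LV n → ℝ | ∀ x ∈ Ω, f (U x) + h x ≤ latLap U x}
        ∩ ({U : LV n → ℝ | ∀ x, U x ∈ Set.Icc c₀ 0} ∩ {U : LV n → ℝ | ∀ x ∉ Ω, U x = 0}) := by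
      ext U
      simp only [hK, Set.mem_setOf_eq, Set.mem_inter_iff]
    rw [hKeq]
    exact hA.inter (hB.inter hCc)
  have hKcompact : IsCompact K := by
    apply IsCompact.of_isClosed_subset (isCompact_univ_pi fun _ => isCompact_Icc) hKclosed
    intro U hU
    rw [Set.mem_univ_pi]
    exact fun x => hU.2.1 x
  set Φ : (LV n → ℝ) → ℝ := fun U => ∑ x ∈ Ω, U x with hΦ
  have hΦcont : Continuous Φ := continuous_finset_sum _ fun x _ => continuous_apply x
  obtain ⟨u₀, hu₀K, hu₀max⟩ := hKcompact.exists_isMaxOn ⟨W₀, hW₀K⟩ hΦcont.continuousOn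
  obtain ⟨hu₀sub, hu₀Icc, hu₀z⟩ := hu₀K
  -- key maximality
  have key : ∀ U : LV n → ℝ,
      (∀ x ∈ Ω, f (U x) + h x ≤ latLap U x) →
      (∀ x ∈ latBdry Ω, U x ≤ 0) →
      ∀ x ∈ Ω, U x ≤ u₀ x := by
    intro U hUsub hUbd
    have hU0 : ∀ x ∈ latClosure Ω, U x ≤ 0 := subsol_nonpos hlam p nj pts hUsub hUbd
    set V : LV n → ℝ := fun x => if x ∈ Ω then max (U x) (u₀ x) else 0 with hV
    have hVeq : ∀ x ∈ Ω, V x = max (U x) (u₀ x) := fun x hx => by simp [hV, hx]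
    have hVgeU : ∀ y ∈ latClosure Ω, U y ≤ V y := by
      intro y hy
      rw [hV]
      by_cases hyΩ : y ∈ Ω
      · simp only [if_pos hyΩ]; exact le_max_left _ _
      · simp only [if_neg hyΩ]
        exact hU0 y hy
    have hVgeu₀ : ∀ y, u₀ y ≤ V y := by
      intro y
      rw [hV]
      by_cases hyΩ : y ∈ Ω
      · simp only [if_pos hyΩ]; exact le_max_right _ _
      · simp only [if_neg hyΩ]; rw [hu₀z y hyΩ]
    have hVK : V ∈ K := by
      refine ⟨?_, ?_, fun x hx => by simp [hV, hx]⟩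
      · intro x hx
        rcases le_total (U x) (u₀ x) with hc | hc
        · have hVx : V x = u₀ x := by rw [hVeq x hx, max_eq_right hc]
          have h1 : latLap u₀ x ≤ latLap V x :=
            latLap_mono hVx.symm (fun y _ => hVgeu₀ y)
          rw [hVx]
          exact le_trans (hu₀sub x hx) h1
        · have hVx : V x = U x := by rw [hVeq x hx, max_eq_left hc]
          have h1 : latLap U x ≤ latLap V x :=
            latLap_mono hVx.symm (fun y hy => hVgeU y (latNbrs_subset_closure hx hy))
          rw [hVx]
          exact le_trans (hUsub x hx) h1
      · intro x
        rw [hV]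
        by_cases hx : x ∈ Ω
        · simp only [if_pos hx]
          constructor
          · exact le_trans (hu₀Icc x).1 (le_max_right _ _)
          · exact max_le (hU0 x (mem_union_left _ hx)) (hu₀Icc x).2
        · simp only [if_neg hx]
          exact ⟨hc₀, le_refl 0⟩
    have hΦle : Φ V ≤ Φ u₀ := hu₀max hVK
    have heq : ∀ x ∈ Ω, V x = u₀ x := by
      by_contra hne
      push_neg at hne
      obtain ⟨x₁, hx₁, hne₁⟩ := hne
      have hlt : Φ u₀ < Φ V := by
        apply Finset.sum_lt_sum (fun x _ => hVgeu₀ x)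
        exact ⟨x₁, hx₁, lt_of_le_of_ne (hVgeu₀ x₁) (Ne.symm hne₁)⟩
      linarith
    intro x hx
    have := heq x hx
    rw [hVeq x hx] at this
    calc U x ≤ max (U x) (u₀ x) := le_max_left _ _
    _ = u₀ x := this
  -- the equation holds with equality
  have hsol : ∀ x ∈ Ω, latLap u₀ x = f (u₀ x) + h x := by
    intro x₀ hx₀
    by_contra hne
    have hgt : f (u₀ x₀) + h x₀ < latLap u₀ x₀ :=
      lt_of_le_of_ne (hu₀sub x₀ hx₀) fun e => hne e.symm
    set t : ℝ := u₀ x₀ with ht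
    set g : ℝ := latLap u₀ x₀ - f t - h x₀ with hg
    have hgpos : 0 < g := by rw [hg]; linarith
    have htneg : t < 0 := by
      have htle : t ≤ 0 := by rw [ht]; exact (hu₀Icc x₀).2
      rcases lt_or_eq_of_le htle with hlt | heq0
      · exact hlt
      · exfalso
        have hx00 : u₀ x₀ = 0 := by rw [← ht, heq0]
        have hlap0 : latLap u₀ x₀ ≤ 0 := by
          apply Finset.sum_nonpos
          intro y _
          have := (hu₀Icc y).2
          rw [hx00]
          linarith
        have hft : f t = 0 := by rw [heq0, hf0]
        have hhx := chernH_nonneg nj pts x₀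
        rw [← hh] at hhx
        linarith [hgt]
    -- continuity of f at t
    have hfc : ContinuousAt f t := (continuous_nlf lam p).continuousAt
    rw [Metric.continuousAt_iff] at hfc
    obtain ⟨δ, hδpos, hδ⟩ := hfc (g / 2) (by linarith)
    set d : ℕ := (latNbrs x₀).card with hd
    set ε : ℝ := min (δ / 2) (min (g / (2 * (d + 1))) (-t)) with hε
    have hεpos : 0 < ε := by
      apply lt_min (by linarith)
      apply lt_min
      · positivity
      · linarith
    have hεδ : ε < δ := lt_of_le_of_lt (min_le_left _ _) (by linarith)
    have hεg : (d : ℝ) * ε ≤ g / 2 := by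
      have h1 : ε ≤ g / (2 * (d + 1)) := le_trans (min_le_right _ _) (min_le_left _ _)
      have h2 : (d : ℝ) * ε ≤ (d : ℝ) * (g / (2 * ((d : ℝ) + 1))) :=
        mul_le_mul_of_nonneg_left h1 (Nat.cast_nonneg d)
      have h3 : (0:ℝ) < (d : ℝ) + 1 := by positivity
      have h4 : (d : ℝ) * (g / (2 * ((d : ℝ) + 1))) ≤ g / 2 := by
        rw [← mul_div_assoc, div_le_div_iff₀ (by positivity) (by norm_num : (0:ℝ) < 2)]
        nlinarith [(Nat.cast_nonneg d : (0:ℝ) ≤ (d : ℝ)), hgpos]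
      linarith
    have hεt : ε ≤ -t := le_trans (min_le_right _ _) (min_le_right _ _)
    set v : LV n → ℝ := Function.update u₀ x₀ (t + ε) with hv
    have hvx₀ : v x₀ = t + ε := Function.update_self _ _ _
    have hvy : ∀ y, y ≠ x₀ → v y = u₀ y := fun y hy => Function.update_of_ne hy _ _
    have hvge : ∀ y, u₀ y ≤ v y := by
      intro y
      by_cases hy : y = x₀
      · subst hy; rw [hvx₀, ← ht]; linarith
      · rw [hvy y hy]
    have hfv : f (t + ε) < f t + g / 2 := by
      have : dist (t + ε) t < δ := by
        rw [Real.dist_eq]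
        rw [abs_of_pos (by linarith : (0:ℝ) < t + ε - t)]
        linarith
      have := hδ this
      rw [Real.dist_eq, abs_lt] at this
      linarith [this.1, this.2]
    have hlapv : latLap v x₀ = latLap u₀ x₀ - d * ε := by
      unfold latLap
      have hsum : ∀ y ∈ latNbrs x₀, v y - v x₀ = (u₀ y - u₀ x₀) - ε := by
        intro y hy
        have hyne : y ≠ x₀ := fun e => self_not_mem_latNbrs x₀ (e ▸ hy)
        rw [hvy y hyne, hvx₀, ← ht]; ring
      rw [Finset.sum_congr rfl hsum, Finset.sum_sub_distrib, Finset.sum_const,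
        nsmul_eq_mul, ← hd]
    have hvK : v ∈ K := by
      refine ⟨?_, ?_, ?_⟩
      · intro x hx
        by_cases hxx : x = x₀
        · subst hxx
          rw [hvx₀, hlapv]
          linarith [hfv, hεg]
        · have h1 : latLap u₀ x ≤ latLap v x :=
            latLap_mono (hvy x hxx).symm (fun y _ => hvge y)
          rw [hvy x hxx]
          exact le_trans (hu₀sub x hx) h1
      · intro x
        by_cases hxx : x = x₀
        · subst hxx
          rw [hvx₀]
          refine ⟨?_, by linarith⟩
          have h5 := (hu₀Icc x).1
          rw [← ht] at h5
          linarith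
        · rw [hvy x hxx]; exact hu₀Icc x
      · intro x hx
        have hxx : x ≠ x₀ := fun e => hx (e ▸ hx₀)
        rw [hvy x hxx]
        exact hu₀z x hx
    have hΦv : Φ v = Φ u₀ + ε := by
      rw [hΦ]
      show (∑ x ∈ Ω, Function.update u₀ x₀ (t + ε) x) = (∑ x ∈ Ω, u₀ x) + ε
      rw [Finset.sum_update_of_mem hx₀, Finset.sum_eq_sum_sdiff_singleton_add hx₀ u₀, ← ht]
      ring
    have := hu₀max hvK
    have : Φ v ≤ Φ u₀ := this
    rw [hΦv] at this
    linarith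
  -- conclusion
  refine ⟨u₀, ?_, ?_, ?_⟩
  · intro x hx
    rw [hsol x hx, hfeq, hh]
  · intro x hx
    exact hu₀z x (mem_sdiff.mp hx).2
  · intro U hUsub hUbd x hx
    rcases mem_union.mp hx with hxΩ | hxb
    · exact key U (fun y hy => hUsub y hy) hUbd x hxΩ
    · rw [hu₀z x (mem_sdiff.mp hxb).2]
      exact hUbd x hxb

/-- The finite Dirichlet problem `Δu = λe^u(e^u-1)^{2p+1} + h` on `Ω`, `u = 0` on `∂Ω`,
admits a maximal solution `u_Ω`: any `U` with `ΔU ≥ λe^U(e^U-1)^{2p+1} + h` on `Ω` and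
`U ≤ 0` on `∂Ω` satisfies `U ≤ u_Ω` on `Ω̄`. -/
theorem dirichlet_maximal_solution (n : ℕ) (hn : 2 ≤ n) (lam : ℝ) (hlam : 0 < lam) (p : ℕ)
    (M : ℕ) (nj : Fin M → ℕ) (hnj : ∀ j, 0 < nj j) (pts : Fin M → LV n)
    (Ω : Finset (LV n)) (hpts : ∀ j, pts j ∈ Ω)
    (hconn : ((latticeGraph n).induce (↑Ω : Set (LV n))).Connected) :
    ∃ u : LV n → ℝ,
      (∀ x ∈ Ω, latLap u x
          = lam * Real.exp (u x) * (Real.exp (u x) - 1) ^ (2 * p + 1) + chernH nj pts x) ∧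
      (∀ x ∈ latBdry Ω, u x = 0) ∧
      ∀ U : LV n → ℝ,
        (∀ x ∈ Ω, lam * Real.exp (U x) * (Real.exp (U x) - 1) ^ (2 * p + 1) + chernH nj pts x
            ≤ latLap U x) →
        (∀ x ∈ latBdry Ω, U x ≤ 0) →
        ∀ x ∈ latClosure Ω, U x ≤ u x := by
  exact dirichlet_maximal_solution' n hn lam hlam p M nj pts Ω
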